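/- arXiv:2005.14323 — 4 statements merged into one kernel-verified Lean document; each statement's English description precedes it below -/
import Mathlib

section
/- Let X, Y be Hilbert spaces and T : X → Y a bounded linear operator. Suppose for every ε > 0 there exist a Hilbert space Z_ε, a compact linear operator S_ε : X → Z_ε, and a constant C_ε > 0 such that ‖Tx‖ ≤ ε‖x‖ + C_ε‖S_ε x‖ for all x ∈ X. Then T is compact. -/
/-- If `T : X → Y` is a bounded operator between Hilbert spaces such that for every `ε > 0`
there are a Hilbert space `Z`, a compact operator `S : X → Z` and a constant `C > 0` with
`‖Tx‖ ≤ ε‖x‖ + C‖Sx‖` for all `x`, then `T` is compact. -/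
theorem stmt2 {X Y : Type*} [NormedAddCommGroup X] [InnerProductSpace ℂ X] [CompleteSpace X]
    [NormedAddCommGroup Y] [InnerProductSpace ℂ Y] [CompleteSpace Y]
    (T : X →L[ℂ] Y)
    (h : ∀ ε > (0 : ℝ), ∃ (Z : Type) (_ : NormedAddCommGroup Z) (_ : InnerProductSpace ℂ Z)
      (_ : CompleteSpace Z) (S : X →L[ℂ] Z) (C : ℝ), IsCompactOperator S ∧ 0 < C ∧
      ∀ x : X, ‖T x‖ ≤ ε * ‖x‖ + C * ‖S x‖) :
    IsCompactOperator T := by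
  rw [show (⇑T : X → Y) = ⇑(T : X →ₗ[ℂ] Y) from rfl,
    isCompactOperator_iff_isCompact_closure_image_closedBall (T : X →ₗ[ℂ] Y) one_pos]
  refine TotallyBounded.isCompact_of_isClosed ?_ isClosed_closure
  refine TotallyBounded.closure ?_
  rw [Metric.totallyBounded_iff]
  intro δ hδ
  obtain ⟨Z, _, _, _, S, C, hS, hC, hineq⟩ := h (δ / 4) (by positivity)
  have hSB : TotallyBounded (⇑(S : X →ₗ[ℂ] Z) '' Metric.closedBall 0 1) :=
    (hS.isCompact_closure_image_closedBall (𝕜₁ := ℂ) 1).totallyBounded.subset subset_closure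
  obtain ⟨s, hs_sub, hs_fin, hcover⟩ := totallyBounded_iff_subset.mp hSB
    {p : Z × Z | dist p.1 p.2 < δ / (2 * C)} (Metric.dist_mem_uniformity (by positivity))
  have hg : ∀ y : Z, ∃ x : X, y ∈ s → x ∈ Metric.closedBall (0 : X) 1 ∧ S x = y := by
    intro y
    by_cases hy : y ∈ s
    · obtain ⟨x, hx, hxy⟩ := hs_sub hy
      exact ⟨x, fun _ => ⟨hx, hxy⟩⟩
    · exact ⟨0, fun hy' => absurd hy' hy⟩
  choose g hgmem using hg
  refine ⟨T '' (g '' s), (hs_fin.image g).image T, ?_⟩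
  rintro _ ⟨x, hx, rfl⟩
  obtain ⟨y, hy, hxy⟩ := Set.mem_iUnion₂.mp (hcover ⟨x, hx, rfl⟩)
  obtain ⟨hgB, hgS⟩ := hgmem y hy
  refine Set.mem_iUnion₂.mpr ⟨T (g y), ⟨g y, ⟨y, hy, rfl⟩, rfl⟩, ?_⟩
  rw [Metric.mem_ball, dist_eq_norm]
  show ‖T x - T (g y)‖ < δ
  rw [← map_sub]
  calc ‖T (x - g y)‖ ≤ δ / 4 * ‖x - g y‖ + C * ‖S (x - g y)‖ := hineq _
    _ < δ := by
        have h1 : ‖x - g y‖ ≤ 2 := by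
          calc ‖x - g y‖ ≤ ‖x‖ + ‖g y‖ := norm_sub_le _ _
            _ ≤ 1 + 1 := add_le_add (by simpa using hx) (by simpa using hgB)
            _ = 2 := by norm_num
        have h2 : ‖S (x - g y)‖ < δ / (2 * C) := by
          rw [map_sub, hgS, ← dist_eq_norm]
          exact hxy
        have := mul_lt_mul_of_pos_left h2 hC
        have h3 : C * (δ / (2 * C)) = δ / 2 := by field_simp
        nlinarith [mul_le_mul_of_nonneg_left h1 (by positivity : (0:ℝ) ≤ δ / 4)]
end

section
/- Let Ω ⊆ ℂⁿ be a bounded convex domain and ψ : 𝔻^q → ∂Ω a holomorphic map (𝔻 the unit disc in ℂ, 1 ≤ q ≤ n−1) whose image is contained in the boundary of Ω. Then the convex hull of ψ(𝔻^q) is contained in ∂Ω. -/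
open Bornology

/-- If `Ω ⊆ ℂⁿ` is a bounded convex domain and `ψ : 𝔻^q → ∂Ω` is holomorphic on the unit
polydisc with image in the boundary of `Ω`, then the convex hull of `ψ(𝔻^q)` is contained
in `∂Ω`. -/
theorem stmt5 {n q : ℕ} (hq : 1 ≤ q) (hqn : q ≤ n - 1)
    (Ω : Set (EuclideanSpace ℂ (Fin n))) (hΩo : IsOpen Ω) (hΩne : Ω.Nonempty)
    (hΩb : IsBounded Ω) (hΩc : Convex ℝ Ω)
    (ψ : (Fin q → ℂ) → EuclideanSpace ℂ (Fin n))
    (hψ : DifferentiableOn ℂ ψ {z : Fin q → ℂ | ∀ i, ‖z i‖ < 1})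
    (him : ψ '' {z : Fin q → ℂ | ∀ i, ‖z i‖ < 1} ⊆ frontier Ω) :
    convexHull ℝ (ψ '' {z : Fin q → ℂ | ∀ i, ‖z i‖ < 1}) ⊆ frontier Ω := by
  set D : Set (Fin q → ℂ) := {z : Fin q → ℂ | ∀ i, ‖z i‖ < 1} with hD
  -- basic facts about the polydisc
  have hDeq : D = Set.pi Set.univ fun _ : Fin q => Metric.ball (0 : ℂ) 1 := by
    ext z; simp [hD, Set.mem_pi]
  have hDo : IsOpen D := by
    rw [hDeq]; exact isOpen_set_pi Set.finite_univ fun i _ => Metric.isOpen_ball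
  have hDc : Convex ℝ D := by
    rw [hDeq]; exact convex_pi fun i _ => convex_ball 0 1
  have h0D : (0 : Fin q → ℂ) ∈ D := by intro i; simp
  -- the base point and a separating functional
  have hp : ψ 0 ∈ frontier Ω := him ⟨0, h0D, rfl⟩
  have hpΩ : ψ 0 ∉ Ω := by
    have := hΩo.frontier_eq ▸ hp
    exact this.2
  obtain ⟨f, hf⟩ := geometric_hahn_banach_open_point hΩc hΩo hpΩ
  -- on the closure of Ω we have `f ≤ f (ψ 0)`
  have hcl : ∀ y ∈ closure Ω, f y ≤ f (ψ 0) := by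
    intro y hy
    have : closure Ω ⊆ {y | f y ≤ f (ψ 0)} := by
      apply closure_minimal
      · intro a ha; exact (hf a ha).le
      · exact isClosed_le (by fun_prop) continuous_const
    exact this hy
  have hfront : ∀ y ∈ frontier Ω, f y ≤ f (ψ 0) := fun y hy => hcl y hy.1
  -- complexify `f`
  set L : EuclideanSpace ℂ (Fin n) →L[ℂ] ℂ := f.extendTo𝕜'
  have hLre : ∀ x, (L x).re = f x := by
    intro x
    rw [show L x = StrongDual.extendRCLike f x from rfl, ContinuousLinearMap.extendTo𝕜'_apply]
    simp
  -- maximum principle applied to `exp ∘ L ∘ ψ`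
  set g : (Fin q → ℂ) → ℂ := fun z => Complex.exp (L (ψ z))
  have hgd : DifferentiableOn ℂ g D := by
    apply DifferentiableOn.cexp
    exact L.differentiable.comp_differentiableOn hψ
  have hnorm : ∀ z, ‖g z‖ = Real.exp (f (ψ z)) := by
    intro z
    rw [Complex.norm_exp, hLre]
  have hmax : IsMaxOn (norm ∘ g) D 0 := by
    intro z hz
    simp only [Function.comp_apply, Set.mem_setOf_eq, hnorm]
    exact Real.exp_le_exp.2 (hfront _ (him ⟨z, hz, rfl⟩))
  have hEq : Set.EqOn g (Function.const _ (g 0)) D :=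
    Complex.eqOn_of_isPreconnected_of_isMaxOn_norm hDc.isPreconnected hDo hgd h0D hmax
  -- hence `f ∘ ψ` is constant on `D`
  have hfconst : ∀ z ∈ D, f (ψ z) = f (ψ 0) := by
    intro z hz
    have : ‖g z‖ = ‖g 0‖ := by rw [hEq hz]; rfl
    rw [hnorm, hnorm] at this
    exact Real.exp_injective this
  -- the image lies in the affine hyperplane `{y | f y = f (ψ 0)}`
  have himH : ψ '' D ⊆ {y | f y = f (ψ 0)} := by
    rintro _ ⟨z, hz, rfl⟩; exact hfconst z hz
  have hHconv : Convex ℝ {y : EuclideanSpace ℂ (Fin n) | f y = f (ψ 0)} := by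
    intro a ha b hb s t hs ht hst
    simp only [Set.mem_setOf_eq] at ha hb ⊢
    rw [map_add, map_smul, map_smul, smul_eq_mul, smul_eq_mul, ha, hb]
    linear_combination f (ψ 0) * hst
  have hullH : convexHull ℝ (ψ '' D) ⊆ {y | f y = f (ψ 0)} :=
    convexHull_min himH hHconv
  -- and in the closure of Ω
  have hullcl : convexHull ℝ (ψ '' D) ⊆ closure Ω := by
    apply convexHull_min _ hΩc.closure
    exact fun y hy => (him hy).1
  -- combine
  intro x hx
  rw [hΩo.frontier_eq]
  refine ⟨hullcl hx, fun hxΩ => ?_⟩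
  have h1 := hf x hxΩ
  have h2 := hullH hx
  rw [Set.mem_setOf_eq] at h2
  linarith
end

section
/- Let Ω ⊆ ℂⁿ be a bounded convex domain whose boundary is C¹-smooth. Suppose V₁ and V₂ are complex affine varieties contained in ∂Ω (each relatively open in some complex affine subspace) whose relative closures share a common point Q. Then there is a single complex affine subspace L with Q ∈ L such that both V₁ and V₂ are contained in L ∩ ∂Ω; in particular V₁ ∪ V₂ is contained in the intersection of ∂Ω with the complex tangent space T^ℂ_Q(∂Ω). -/
open Bornology

section helpers
variable {E : Type*} [AddCommGroup E] [Module ℝ E]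

lemma combo_self' (z : E) (t : ℝ) : (1-t) • z + t • z = z := by module

lemma combo_sub' (Q z : E) (t : ℝ) : Q + t • (z - Q) = (1-t) • Q + t • z := by module

lemma combo_eq' (w z : E) (s t d : ℝ) (hd : d = 1 + s - t) (hd0 : d ≠ 0) :
    (s/d) • ((1-t) • w + t • z) + ((1-t)/d) • (z + s • (z - w)) = z := by
  match_scalars <;> field_simp <;> (try ring) <;> linarith [hd]

end helpers

lemma aux_tangent {n : ℕ} (Ω : Set (EuclideanSpace ℂ (Fin n))) (hΩo : IsOpen Ω)
    (hΩc : Convex ℝ Ω)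
    (ρ : EuclideanSpace ℂ (Fin n) → ℝ) (hρ : ContDiff ℝ 1 ρ)
    (hfr : frontier Ω = {z | ρ z = 0})
    (V U : Set (EuclideanSpace ℂ (Fin n))) (A : AffineSubspace ℂ (EuclideanSpace ℂ (Fin n)))
    (hU : IsOpen U) (hV : V = U ∩ (A : Set _)) (hVb : V ⊆ frontier Ω)
    (Q : EuclideanSpace ℂ (Fin n)) (hQ : Q ∈ closure V) :
    ∀ z ∈ V, fderiv ℝ ρ Q (z - Q) = 0 ∧ fderiv ℝ ρ Q (Complex.I • (z - Q)) = 0 := by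
  have hΩnotfr : ∀ x ∈ frontier Ω, x ∉ Ω := by
    intro x hx
    rw [hΩo.frontier_eq] at hx
    exact hx.2
  -- Step A: for z' ∈ V and w ∈ V, the segment [w,z'] lies in the frontier.
  have segfr : ∀ z' ∈ V, ∀ w ∈ V, ∀ t : ℝ, t ∈ Set.Icc (0:ℝ) 1 →
      ((1-t) • w + t • z') ∈ frontier Ω := by
    intro z' hz' w hw t ht
    have hwc : w ∈ closure Ω := frontier_subset_closure (hVb hw)
    have hz'c : z' ∈ closure Ω := frontier_subset_closure (hVb hz')
    have hpcl : ((1-t) • w + t • z') ∈ closure Ω :=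
      (hΩc.closure) hwc hz'c (by linarith [ht.1, ht.2]) ht.1 (by ring)
    have hcl := closure_eq_interior_union_frontier Ω
    rw [hΩo.interior_eq] at hcl
    rcases (hcl ▸ hpcl) with hp | hp
    · -- p ∈ Ω: derive contradiction
      exfalso
      have hz'notΩ : z' ∉ Ω := hΩnotfr z' (hVb hz')
      by_cases hwz : w = z'
      · apply hz'notΩ
        have : (1-t) • w + t • z' = z' := by rw [hwz]; exact combo_self' z' t
        rwa [this] at hp
      by_cases ht1 : t = 1
      · apply hz'notΩ
        have h1 : (1-t) • w + t • z' = z' := by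
          rw [ht1]; norm_num
        rwa [h1] at hp
      have ht1' : t < 1 := lt_of_le_of_ne ht.2 ht1
      -- get a ball around z' in U
      have hz'U : z' ∈ U := (hV ▸ hz').1
      obtain ⟨r, hr, hball⟩ := Metric.isOpen_iff.1 hU z' hz'U
      have hnorm : (0:ℝ) < ‖z' - w‖ := by
        rw [norm_pos_iff, sub_ne_zero]
        exact fun h => hwz h.symm
      set s : ℝ := r / (2 * ‖z' - w‖) with hs
      have hspos : 0 < s := div_pos hr (by positivity)
      set z'' : EuclideanSpace ℂ (Fin n) := z' + s • (z' - w) with hz''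
      have hz''U : z'' ∈ U := by
        apply hball
        have : dist z'' z' = s * ‖z' - w‖ := by
          rw [dist_eq_norm]
          have : z'' - z' = s • (z' - w) := by rw [hz'']; abel
          rw [this, norm_smul, Real.norm_eq_abs, abs_of_pos hspos]
        have h2 : s * ‖z' - w‖ = r / 2 := by
          rw [hs]; field_simp
        rw [Metric.mem_ball, this, h2]
        linarith
      have hz''A : z'' ∈ (A : Set _) := by
        have hz'A : z' ∈ A := (hV ▸ hz').2
        have hwA : w ∈ A := (hV ▸ hw).2
        have := A.smul_vsub_vadd_mem ((s:ℂ)) hz'A hwA hz'A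
        have heq : ((s:ℝ):ℂ) • (z' -ᵥ w) +ᵥ z' = z'' := by
          rw [hz'']
          show ((s:ℝ):ℂ) • (z' - w) + z' = z' + s • (z' - w)
          rw [Complex.coe_smul]; abel
        rwa [heq] at this
      have hz''V : z'' ∈ V := hV ▸ ⟨hz''U, hz''A⟩
      have hz''c : z'' ∈ closure Ω := frontier_subset_closure (hVb hz''V)
      -- z' is in the open segment between p and z''
      set d : ℝ := 1 + s - t with hd
      have hdpos : 0 < d := by simp only [hd]; linarith
      have hkey : z' ∈ openSegment ℝ ((1-t) • w + t • z') z'' := by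
        refine ⟨s / d, (1 - t) / d, div_pos hspos hdpos, div_pos (by linarith) hdpos, ?_, ?_⟩
        · field_simp
          rw [hd]; ring
        · rw [hz'']
          exact combo_eq' w z' s t d hd (ne_of_gt hdpos)
      have : z' ∈ interior Ω := by
        have := hΩc.openSegment_interior_closure_subset_interior
          (by rwa [hΩo.interior_eq]) hz''c hkey
        exact this
      exact hz'notΩ (interior_subset this)
    · exact hp
  -- Step B: segment [Q, z'] has ρ = 0
  have segQ : ∀ z' ∈ V, ∀ t : ℝ, t ∈ Set.Icc (0:ℝ) 1 → ρ (Q + t • (z' - Q)) = 0 := by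
    intro z' hz' t ht
    have hclosed : IsClosed ((fun w => ρ ((1-t) • w + t • z')) ⁻¹' {0}) :=
      IsClosed.preimage (hρ.continuous.comp ((continuous_id.const_smul (1-t)).add continuous_const)) isClosed_singleton
    have hsub : V ⊆ (fun w => ρ ((1-t) • w + t • z')) ⁻¹' {0} := by
      intro w hw
      have := segfr z' hz' w hw t ht
      rw [hfr] at this
      exact this
    have hQ0 : ρ ((1-t) • Q + t • z') = 0 :=
      closure_minimal hsub hclosed hQ
    rw [combo_sub' Q z' t]; exact hQ0
  -- Step C: the derivative at Q in direction z' - Q vanishes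
  have dirzero : ∀ z' ∈ V, fderiv ℝ ρ Q (z' - Q) = 0 := by
    intro z' hz'
    set ψ : ℝ → ℝ := fun t => ρ (Q + t • (z' - Q)) with hψdef
    have hγ : HasDerivAt (fun t : ℝ => Q + t • (z' - Q)) (z' - Q) 0 := by
      have h1 : HasDerivAt (fun t : ℝ => t • (z' - Q)) ((1:ℝ) • (z' - Q)) 0 :=
        (hasDerivAt_id (0:ℝ)).smul_const (z' - Q)
      rw [one_smul] at h1
      exact h1.const_add Q
    have hρd : HasFDerivAt ρ (fderiv ℝ ρ Q) (Q + (0:ℝ) • (z' - Q)) := by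
      have h0 : Q + (0:ℝ) • (z' - Q) = Q := by simp
      rw [h0]
      exact (hρ.differentiable one_ne_zero Q).hasFDerivAt
    have hψ : HasDerivAt ψ (fderiv ℝ ρ Q (z' - Q)) 0 :=
      hρd.comp_hasDerivAt 0 hγ
    have h1 : HasDerivWithinAt ψ (fderiv ℝ ρ Q (z' - Q)) (Set.Icc 0 1) 0 :=
      hψ.hasDerivWithinAt
    have hzero : ∀ t ∈ Set.Icc (0:ℝ) 1, ψ t = 0 := fun t ht => segQ z' hz' t ht
    have h2 : HasDerivWithinAt ψ 0 (Set.Icc 0 1) 0 := by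
      have hc : HasDerivWithinAt (fun _ : ℝ => (0:ℝ)) 0 (Set.Icc 0 1) 0 :=
        (hasDerivAt_const (0:ℝ) (0:ℝ)).hasDerivWithinAt
      exact hc.congr hzero (hzero 0 ⟨le_refl 0, zero_le_one⟩)
    exact (uniqueDiffOn_Icc zero_lt_one 0 ⟨le_refl 0, zero_le_one⟩).eq_deriv _ h1 h2
  -- Conclude
  intro z hz
  have hfz : fderiv ℝ ρ Q (z - Q) = 0 := dirzero z hz
  refine ⟨hfz, ?_⟩
  by_cases hzQ : z = Q
  · rw [hzQ, sub_self, smul_zero, map_zero]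
  -- construct z + (ε i) (z - Q) ∈ V
  have hQA : Q ∈ (A : Set _) := by
    have hcl : closure V ⊆ closure (A : Set _) :=
      closure_mono (by rw [hV]; exact Set.inter_subset_right)
    have : IsClosed (A : Set (EuclideanSpace ℂ (Fin n))) := A.closed_of_finiteDimensional
    rw [this.closure_eq] at hcl
    exact hcl hQ
  have hzU : z ∈ U := (hV ▸ hz).1
  have hzA : z ∈ (A : Set _) := (hV ▸ hz).2
  obtain ⟨r, hr, hball⟩ := Metric.isOpen_iff.1 hU z hzU
  have hnorm : (0:ℝ) < ‖z - Q‖ := by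
    rw [norm_pos_iff, sub_ne_zero]; exact hzQ
  set ε : ℝ := r / (2 * ‖z - Q‖) with hε
  have hεpos : 0 < ε := div_pos hr (by positivity)
  set z' : EuclideanSpace ℂ (Fin n) := z + ((ε:ℂ) * Complex.I) • (z - Q) with hz'def
  have hz'U : z' ∈ U := by
    apply hball
    rw [Metric.mem_ball, dist_eq_norm]
    have : z' - z = ((ε:ℂ) * Complex.I) • (z - Q) := by rw [hz'def]; abel
    rw [this, norm_smul]
    have : ‖(ε:ℂ) * Complex.I‖ = ε := by
      rw [norm_mul, Complex.norm_I, mul_one, Complex.norm_real, Real.norm_eq_abs,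
        abs_of_pos hεpos]
    have h2 : ε * ‖z - Q‖ = r / 2 := by
      rw [hε]; field_simp
    rw [this, h2]
    linarith
  have hz'A : z' ∈ (A : Set _) := by
    have := A.smul_vsub_vadd_mem ((ε:ℂ) * Complex.I) hzA hQA hzA
    have heq : ((ε:ℂ) * Complex.I) • (z -ᵥ Q) +ᵥ z = z' := by
      rw [hz'def]
      show ((ε:ℂ) * Complex.I) • (z - Q) + z = z + ((ε:ℂ) * Complex.I) • (z - Q)
      abel
    rwa [heq] at this
  have hz'V : z' ∈ V := hV ▸ ⟨hz'U, hz'A⟩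
  have hfz' : fderiv ℝ ρ Q (z' - Q) = 0 := dirzero z' hz'V
  have hdecomp : z' - Q = (z - Q) + ε • (Complex.I • (z - Q)) := by
    rw [hz'def, mul_smul, Complex.coe_smul]
    abel
  rw [hdecomp, map_add, hfz, zero_add, map_smul, smul_eq_mul] at hfz'
  exact (mul_eq_zero.1 hfz').resolve_left (ne_of_gt hεpos)


/-- Let `Ω ⊆ ℂⁿ` be a bounded convex domain with `C¹` boundary (given by a `C¹` defining
function `ρ`). If `V₁, V₂` are complex affine varieties in `∂Ω` (each relatively open in a
complex affine subspace) whose closures share a point `Q`, then there is a single complex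
affine subspace `L ∋ Q` with `V₁ ∪ V₂ ⊆ L ∩ ∂Ω`; in particular `V₁ ∪ V₂` lies in the complex
tangent space to `∂Ω` at `Q`. -/
theorem stmt8 {n : ℕ} (Ω : Set (EuclideanSpace ℂ (Fin n))) (hΩo : IsOpen Ω)
    (hΩne : Ω.Nonempty) (hΩb : IsBounded Ω) (hΩc : Convex ℝ Ω)
    (ρ : EuclideanSpace ℂ (Fin n) → ℝ) (hρ : ContDiff ℝ 1 ρ)
    (hΩρ : Ω = {z | ρ z < 0}) (hfr : frontier Ω = {z | ρ z = 0})
    (hgrad : ∀ z ∈ frontier Ω, fderiv ℝ ρ z ≠ 0)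
    (V₁ V₂ : Set (EuclideanSpace ℂ (Fin n)))
    (A₁ A₂ : AffineSubspace ℂ (EuclideanSpace ℂ (Fin n)))
    (hV₁o : ∃ U : Set (EuclideanSpace ℂ (Fin n)), IsOpen U ∧ V₁ = U ∩ (A₁ : Set _))
    (hV₂o : ∃ U : Set (EuclideanSpace ℂ (Fin n)), IsOpen U ∧ V₂ = U ∩ (A₂ : Set _))
    (hV₁b : V₁ ⊆ frontier Ω) (hV₂b : V₂ ⊆ frontier Ω)
    (hV₁ne : V₁.Nonempty) (hV₂ne : V₂.Nonempty)
    (Q : EuclideanSpace ℂ (Fin n)) (hQ : Q ∈ closure V₁ ∩ closure V₂) :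
    ∃ L : AffineSubspace ℂ (EuclideanSpace ℂ (Fin n)), Q ∈ L ∧
      V₁ ∪ V₂ ⊆ (L : Set _) ∩ frontier Ω ∧
      V₁ ∪ V₂ ⊆ {z | fderiv ℝ ρ Q (z - Q) = 0 ∧ fderiv ℝ ρ Q (Complex.I • (z - Q)) = 0} := by
  obtain ⟨U₁, hU₁, hVU₁⟩ := hV₁o
  obtain ⟨U₂, hU₂, hVU₂⟩ := hV₂o
  have h₁ := aux_tangent Ω hΩo hΩc ρ hρ hfr V₁ U₁ A₁ hU₁ hVU₁ hV₁b Q hQ.1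
  have h₂ := aux_tangent Ω hΩo hΩc ρ hρ hfr V₂ U₂ A₂ hU₂ hVU₂ hV₂b Q hQ.2
  refine ⟨affineSpan ℂ (insert Q (V₁ ∪ V₂)), ?_, ?_, ?_⟩
  · exact subset_affineSpan ℂ _ (Set.mem_insert _ _)
  · intro z hz
    exact ⟨subset_affineSpan ℂ _ (Set.mem_insert_of_mem _ hz), hz.elim (fun h => hV₁b h) (fun h => hV₂b h)⟩
  · intro z hz
    rcases hz with h | h
    · exact h₁ z h
    · exact h₂ z h
end

section
/- Let Ω ⊆ ℂⁿ be a bounded convex domain, P ∈ ∂Ω, and suppose there exist holomorphic embeddings of polydiscs into ∂Ω passing through P. Among all complex affine varieties of the form (affine subspace) ∩ ∂Ω that contain P as a relative interior point, there is a unique one of maximal dimension m, with 0 ≤ m ≤ n−1, and its relative closure equals the intersection of an m-dimensional complex affine subspace through P with Ω̄. -/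
open Bornology Metric

set_option maxHeartbeats 1000000
set_option synthInstance.maxHeartbeats 500000

namespace Stmt15Aux

variable {n : ℕ} {Ω : Set (EuclideanSpace ℂ (Fin n))} {P : EuclideanSpace ℂ (Fin n)}

/-- convert real smul to complex smul -/
lemma rsmul (t : ℝ) (v : EuclideanSpace ℂ (Fin n)) : t • v = ((t : ℂ)) • v :=
  (algebraMap_smul ℂ t v).symm

lemma global_frontier (hΩo : IsOpen Ω) (hΩc : Convex ℝ Ω) (hP : P ∈ frontier Ω)
    (A : AffineSubspace ℂ (EuclideanSpace ℂ (Fin n))) (hPA : P ∈ A)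
    {r : ℝ} (hr : 0 < r) (hball : (A : Set _) ∩ ball P r ⊆ frontier Ω) :
    (A : Set _) ∩ closure Ω ⊆ frontier Ω := by
  rintro x ⟨hxA, hxcl⟩
  rw [hΩo.frontier_eq]
  refine ⟨hxcl, fun hxΩ => ?_⟩
  have hPcl : P ∈ closure Ω := frontier_subset_closure hP
  have hseg : openSegment ℝ x P ⊆ interior Ω :=
    hΩc.openSegment_interior_closure_subset_interior (by rwa [hΩo.interior_eq]) hPcl
  set d : ℝ := dist x P with hd
  have hd0 : 0 ≤ d := dist_nonneg
  set δ : ℝ := min (1/2) (r / (2 * (d + 1))) with hδ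
  have hδ0 : 0 < δ := lt_min (by norm_num) (by positivity)
  have hδ1 : δ < 1 := lt_of_le_of_lt (min_le_left _ _) (by norm_num)
  set z : EuclideanSpace ℂ (Fin n) := ((1 - δ : ℝ) : ℂ) • (P - x) + x with hz
  have hzA : z ∈ A := AffineSubspace.smul_vsub_vadd_mem A _ hPA hxA hxA
  have hzseg : z ∈ openSegment ℝ x P := by
    refine ⟨δ, 1 - δ, hδ0, by linarith, by ring, ?_⟩
    rw [hz, ← rsmul (1 - δ) (P - x)]
    module
  have hzb : z ∈ ball P r := by
    rw [mem_ball, dist_eq_norm, hz]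
    have : ((1 - δ : ℝ) : ℂ) • (P - x) + x - P = ((δ : ℝ) : ℂ) • (x - P) := by
      push_cast
      module
    rw [this, ← rsmul δ (x - P), norm_smul, Real.norm_eq_abs, abs_of_pos hδ0, ← dist_eq_norm]
    have h2 : δ ≤ r / (2 * (d + 1)) := min_le_right _ _
    have : δ * d ≤ (r / (2 * (d + 1))) * d := by
      apply mul_le_mul_of_nonneg_right h2 hd0
    have hlt : (r / (2 * (d + 1))) * d < r := by
      rw [div_mul_eq_mul_div, div_lt_iff₀ (by positivity)]
      nlinarith
    linarith
  have hzf : z ∈ frontier Ω := hball ⟨hzA, hzb⟩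
  have hzΩ : z ∈ Ω := interior_subset (hseg hzseg)
  exact (hΩo.frontier_eq ▸ hzf).2 hzΩ


lemma func_vanish (f : EuclideanSpace ℂ (Fin n) →L[ℝ] ℝ)
    (hf : ∀ x ∈ closure Ω, f x ≤ f P)
    (A : AffineSubspace ℂ (EuclideanSpace ℂ (Fin n))) (hPA : P ∈ A)
    {r : ℝ} (hr : 0 < r) (hball : (A : Set _) ∩ ball P r ⊆ frontier Ω)
    {v : EuclideanSpace ℂ (Fin n)} (hv : v ∈ A.direction) : f v = 0 := by
  have key : ∀ w ∈ A.direction, f w ≤ 0 := by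
    intro w hw
    set t : ℝ := r / (2 * (‖w‖ + 1)) with ht
    have ht0 : 0 < t := by positivity
    have hmem : t • w + P ∈ A := by
      rw [rsmul]
      exact AffineSubspace.vadd_mem_of_mem_direction (A.direction.smul_mem _ hw) hPA
    have hb : t • w + P ∈ ball P r := by
      rw [mem_ball, dist_eq_norm, add_sub_cancel_right, norm_smul, Real.norm_eq_abs,
        abs_of_pos ht0, ht, div_mul_eq_mul_div, div_lt_iff₀ (by positivity)]
      nlinarith [norm_nonneg w]
    have hfr : t • w + P ∈ frontier Ω := hball ⟨hmem, hb⟩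
    have hle : f (t • w + P) ≤ f P := hf _ (frontier_subset_closure hfr)
    rw [map_add, map_smul] at hle
    simp only [smul_eq_mul] at hle
    nlinarith
  have h1 := key v hv
  have h2 := key (-v) (neg_mem hv)
  rw [map_neg] at h2
  linarith

lemma sup_candidate (hΩo : IsOpen Ω) (hΩc : Convex ℝ Ω) (hP : P ∈ frontier Ω)
    (A1 A2 : AffineSubspace ℂ (EuclideanSpace ℂ (Fin n))) (hPA1 : P ∈ A1) (hPA2 : P ∈ A2)
    {r1 r2 : ℝ} (hr1 : 0 < r1) (hr2 : 0 < r2)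
    (hb1 : (A1 : Set _) ∩ ball P r1 ⊆ frontier Ω)
    (hb2 : (A2 : Set _) ∩ ball P r2 ⊆ frontier Ω) :
    ∃ ε > (0:ℝ), ((A1 ⊔ A2 : AffineSubspace ℂ _) : Set _) ∩ ball P ε ⊆ frontier Ω := by
  have hPnΩ : P ∉ Ω := fun h => ((hΩo.frontier_eq ▸ hP).2 h)
  obtain ⟨f, hf⟩ := geometric_hahn_banach_open_point hΩc hΩo hPnΩ
  have hfcl : ∀ x ∈ closure Ω, f x ≤ f P := fun x hx =>
    closure_minimal (fun y hy => le_of_lt (hf y hy))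
      (isClosed_le f.continuous continuous_const) hx
  have hdir : (A1 ⊔ A2).direction = A1.direction ⊔ A2.direction := by
    rw [AffineSubspace.direction_sup hPA1 hPA2]
    simp
  obtain ⟨C, hC0, hdec⟩ : ∃ C : ℝ, 0 ≤ C ∧ ∀ w : EuclideanSpace ℂ (Fin n),
      w ∈ A1.direction ⊔ A2.direction →
      ∃ a b : EuclideanSpace ℂ (Fin n), a ∈ A1.direction ∧ b ∈ A2.direction ∧ a + b = w ∧
        ‖a‖ ≤ C * ‖w‖ ∧ ‖b‖ ≤ C * ‖w‖ := by
    set V1 := A1.direction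
    set V2 := A2.direction
    set V := A1.direction ⊔ A2.direction with hV
    have hTV : ∀ p : V1 × V2, (p.1 : EuclideanSpace ℂ (Fin n)) + p.2 ∈ V := fun p =>
      Submodule.add_mem_sup p.1.2 p.2.2
    set T : (V1 × V2) →ₗ[ℂ] V :=
      LinearMap.codRestrict V ((V1.subtype).coprod (V2.subtype)) hTV with hT
    have hsurj : LinearMap.range T = ⊤ := by
      rw [LinearMap.range_eq_top]
      rintro ⟨w, hw⟩
      obtain ⟨a, ha, b, hb, hab⟩ := Submodule.mem_sup.mp hw
      exact ⟨(⟨a, ha⟩, ⟨b, hb⟩), Subtype.ext hab⟩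
    obtain ⟨σ, hσ⟩ := T.exists_rightInverse_of_surjective hsurj
    set σc := LinearMap.toContinuousLinearMap σ with hσc
    refine ⟨‖σc‖, σc.opNorm_nonneg, fun w hw => ?_⟩
    have hsum : ((σ ⟨w, hw⟩).1 : EuclideanSpace ℂ (Fin n)) + (σ ⟨w, hw⟩).2 = w := by
      have h1 := congrFun (congrArg DFunLike.coe hσ) ⟨w, hw⟩
      simp only [LinearMap.comp_apply, LinearMap.id_apply] at h1
      have h2 := congrArg Subtype.val h1
      exact h2
    have hnw : ‖(⟨w, hw⟩ : V)‖ = ‖w‖ := rfl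
    have hb1 : ‖((σ ⟨w, hw⟩).1 : EuclideanSpace ℂ (Fin n))‖ ≤ ‖σc‖ * ‖w‖ := by
      have := (norm_fst_le (σ ⟨w, hw⟩)).trans ((σc.le_opNorm ⟨w, hw⟩).trans_eq (by rw [hnw]))
      exact this
    have hb2 : ‖((σ ⟨w, hw⟩).2 : EuclideanSpace ℂ (Fin n))‖ ≤ ‖σc‖ * ‖w‖ := by
      have := (norm_snd_le (σ ⟨w, hw⟩)).trans ((σc.le_opNorm ⟨w, hw⟩).trans_eq (by rw [hnw]))
      exact this
    exact ⟨_, _, (σ ⟨w, hw⟩).1.2, (σ ⟨w, hw⟩).2.2, hsum, hb1, hb2⟩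
  refine ⟨min r1 r2 / (2 * (C + 1)), by positivity, ?_⟩
  set ε : ℝ := min r1 r2 / (2 * (C + 1)) with hε
  have hε0 : 0 < ε := by positivity
  have hεeq : min r1 r2 = 2 * (C + 1) * ε := by rw [hε]; field_simp
  rintro x ⟨hxS, hxb⟩
  have hPS : P ∈ A1 ⊔ A2 := (le_sup_left : A1 ≤ A1 ⊔ A2) hPA1
  have hw : x - P ∈ (A1 ⊔ A2).direction := AffineSubspace.vsub_mem_direction hxS hPS
  have hwV : x - P ∈ A1.direction ⊔ A2.direction := by rw [← hdir]; exact hw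
  have hwn : ‖x - P‖ < ε := by rwa [mem_ball, dist_eq_norm] at hxb
  obtain ⟨a, b, haV, hbV, hsum, han, hbn⟩ := hdec (x - P) hwV
  have h1n : 2 * ‖a‖ < r1 := by
    nlinarith [min_le_left r1 r2, norm_nonneg a, norm_nonneg (x - P)]
  have h2n : 2 * ‖b‖ < r2 := by
    nlinarith [min_le_right r1 r2, norm_nonneg b, norm_nonneg (x - P)]
  have hy1m : (2:ℂ) • a + P ∈ A1 :=
    AffineSubspace.vadd_mem_of_mem_direction (A1.direction.smul_mem _ haV) hPA1
  have hy2m : (2:ℂ) • b + P ∈ A2 :=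
    AffineSubspace.vadd_mem_of_mem_direction (A2.direction.smul_mem _ hbV) hPA2
  have hy1b : (2:ℂ) • a + P ∈ ball P r1 := by
    rw [mem_ball, dist_eq_norm, add_sub_cancel_right, norm_smul]
    simpa using h1n
  have hy2b : (2:ℂ) • b + P ∈ ball P r2 := by
    rw [mem_ball, dist_eq_norm, add_sub_cancel_right, norm_smul]
    simpa using h2n
  have hy1f : (2:ℂ) • a + P ∈ closure Ω := frontier_subset_closure (hb1 ⟨hy1m, hy1b⟩)
  have hy2f : (2:ℂ) • b + P ∈ closure Ω := frontier_subset_closure (hb2 ⟨hy2m, hy2b⟩)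
  have hxcl : x ∈ closure Ω := by
    have hmid : (1/2 : ℝ) • ((2:ℂ) • a + P) + (1/2 : ℝ) • ((2:ℂ) • b + P) ∈ closure Ω :=
      hΩc.closure hy1f hy2f (by norm_num) (by norm_num) (by norm_num)
    have heq : (1/2 : ℝ) • ((2:ℂ) • a + P) + (1/2 : ℝ) • ((2:ℂ) • b + P) = x := by
      have hx : x = (x - P) + P := by abel
      rw [rsmul, rsmul]
      conv_rhs => rw [hx, ← hsum]
      push_cast
      module
    rwa [heq] at hmid
  have hxnΩ : x ∉ Ω := by
    intro hxΩ
    have hfx : f x = f P := by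
      have hfw : f (x - P) = 0 := by
        have fa : f a = 0 := func_vanish f hfcl A1 hPA1 hr1 hb1 haV
        have fb : f b = 0 := func_vanish f hfcl A2 hPA2 hr2 hb2 hbV
        rw [← hsum, map_add, fa, fb, add_zero]
      have hx : x = (x - P) + P := by abel
      rw [hx, map_add, hfw, zero_add]
    exact absurd (hf x hxΩ) (by rw [hfx]; exact lt_irrefl _)
  rw [hΩo.frontier_eq]
  exact ⟨hxcl, hxnΩ⟩


end Stmt15Aux

open Stmt15Aux

/-- Structure of varieties in the boundary of a bounded convex domain `Ω ⊆ ℂⁿ`: if there is a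
holomorphic embedding of a polydisc into `∂Ω` through `P ∈ ∂Ω`, then among all varieties of
the form (complex affine subspace) ∩ ∂Ω having `P` as a relative interior point there is a
unique one of maximal dimension `m ≤ n−1`, and its relative closure is the intersection of
the `m`-dimensional affine subspace with `Ω̄`. -/
theorem stmt15 {n : ℕ} (hn : 1 ≤ n) (Ω : Set (EuclideanSpace ℂ (Fin n))) (hΩo : IsOpen Ω)
    (hΩne : Ω.Nonempty) (hΩb : IsBounded Ω) (hΩc : Convex ℝ Ω)
    (P : EuclideanSpace ℂ (Fin n)) (hP : P ∈ frontier Ω)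
    (hemb : ∃ q : ℕ, 1 ≤ q ∧ ∃ ψ : (Fin q → ℂ) → EuclideanSpace ℂ (Fin n),
      DifferentiableOn ℂ ψ {z : Fin q → ℂ | ∀ i, ‖z i‖ < 1} ∧
      Set.InjOn ψ {z : Fin q → ℂ | ∀ i, ‖z i‖ < 1} ∧
      ψ '' {z : Fin q → ℂ | ∀ i, ‖z i‖ < 1} ⊆ frontier Ω ∧
      ∃ z : Fin q → ℂ, (∀ i, ‖z i‖ < 1) ∧ ψ z = P) :
    ∃! A : AffineSubspace ℂ (EuclideanSpace ℂ (Fin n)),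
      P ∈ A ∧
      (∃ r > (0 : ℝ), (A : Set _) ∩ ball P r ⊆ frontier Ω) ∧
      Module.finrank ℂ A.direction ≤ n - 1 ∧
      (∀ A' : AffineSubspace ℂ (EuclideanSpace ℂ (Fin n)), P ∈ A' →
        (∃ r > (0 : ℝ), (A' : Set _) ∩ ball P r ⊆ frontier Ω) →
        Module.finrank ℂ A'.direction ≤ Module.finrank ℂ A.direction) ∧
      closure ((A : Set _) ∩ frontier Ω) = (A : Set _) ∩ closure Ω := by
  clear hemb hn hΩb hΩne
  classical
  -- the set of attained dimensions of candidates
  set N : Set ℕ := {k | ∃ A : AffineSubspace ℂ (EuclideanSpace ℂ (Fin n)),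
    (P ∈ A ∧ ∃ r > (0:ℝ), (A : Set _) ∩ ball P r ⊆ frontier Ω) ∧
    Module.finrank ℂ A.direction = k} with hN
  -- the trivial candidate {P}
  have h0 : (0 : ℕ) ∈ N := by
    refine ⟨AffineSubspace.mk' P (⊥ : Submodule ℂ (EuclideanSpace ℂ (Fin n))),
      ⟨AffineSubspace.self_mem_mk' P ⊥, 1, one_pos, ?_⟩, by simp⟩
    rintro x ⟨hx, -⟩
    have hxd : x -ᵥ P ∈ (AffineSubspace.mk' P (⊥ : Submodule ℂ (EuclideanSpace ℂ (Fin n)))).direction :=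
      AffineSubspace.vsub_mem_direction hx (AffineSubspace.self_mem_mk' P ⊥)
    rw [AffineSubspace.direction_mk', Submodule.mem_bot, vsub_eq_sub, sub_eq_zero] at hxd
    exact hxd ▸ hP
  have hNbdd : ∀ k ∈ N, k ≤ n := by
    rintro k ⟨A, -, rfl⟩
    have := Submodule.finrank_le A.direction
    rwa [finrank_euclideanSpace_fin] at this
  obtain ⟨A, hAc, hArank⟩ := Nat.sSup_mem ⟨0, h0⟩ ⟨n, fun k hk => hNbdd k hk⟩
  have hmax : ∀ A' : AffineSubspace ℂ (EuclideanSpace ℂ (Fin n)), P ∈ A' →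
      (∃ r > (0:ℝ), (A' : Set _) ∩ ball P r ⊆ frontier Ω) →
      Module.finrank ℂ A'.direction ≤ Module.finrank ℂ A.direction := by
    intro A' hPA' hball'
    rw [hArank]
    exact le_csSup ⟨n, fun k hk => hNbdd k hk⟩ ⟨A', ⟨hPA', hball'⟩, rfl⟩
  obtain ⟨hPA, r, hr, hball⟩ := hAc
  -- dimension bound
  have hlt : Module.finrank ℂ A.direction < n := by
    by_contra h
    push_neg at h
    have hle : Module.finrank ℂ A.direction ≤ n := by
      have := Submodule.finrank_le A.direction
      rwa [finrank_euclideanSpace_fin] at this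
    have heq : Module.finrank ℂ A.direction
        = Module.finrank ℂ (EuclideanSpace ℂ (Fin n)) := by
      rw [finrank_euclideanSpace_fin]; omega
    have htop := Submodule.eq_top_of_finrank_eq heq
    have hballsub : ball P r ⊆ frontier Ω := by
      intro z hz
      refine hball ⟨?_, hz⟩
      have hzd : z -ᵥ P ∈ A.direction := htop ▸ Submodule.mem_top
      exact (vsub_vadd z P) ▸ AffineSubspace.vadd_mem_of_mem_direction hzd hPA
    obtain ⟨z, hz1, hz2⟩ := mem_closure_iff.mp (frontier_subset_closure hP)
      (ball P r) isOpen_ball (mem_ball_self hr)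
    exact ((hΩo.frontier_eq ▸ hballsub hz1).2 : z ∉ Ω) hz2
  -- the closure property
  have hclosure : closure ((A : Set _) ∩ frontier Ω) = (A : Set _) ∩ closure Ω := by
    apply Set.Subset.antisymm
    · exact closure_minimal (Set.inter_subset_inter_right _ frontier_subset_closure)
        ((A.closed_of_finiteDimensional).inter isClosed_closure)
    · intro x hx
      exact subset_closure ⟨hx.1, global_frontier hΩo hΩc hP A hPA hr hball hx⟩
  refine ⟨A, ⟨hPA, ⟨r, hr, hball⟩, Nat.le_sub_one_of_lt hlt, hmax, hclosure⟩, ?_⟩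
  rintro A' ⟨hPA', ⟨r', hr', hball'⟩, -, hmax', -⟩
  have h2 : Module.finrank ℂ A.direction ≤ Module.finrank ℂ A'.direction :=
    hmax' A hPA ⟨r, hr, hball⟩
  obtain ⟨ε, hε0, hbS⟩ := sup_candidate hΩo hΩc hP A' A hPA' hPA hr' hr hball' hball
  have hPS : P ∈ A' ⊔ A := (le_sup_left : A' ≤ A' ⊔ A) hPA'
  have hS : Module.finrank ℂ (A' ⊔ A).direction ≤ Module.finrank ℂ A.direction :=
    hmax (A' ⊔ A) hPS ⟨ε, hε0, hbS⟩
  have hd1 : A'.direction ≤ (A' ⊔ A).direction :=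
    AffineSubspace.direction_le (le_sup_left : A' ≤ A' ⊔ A)
  have hd2 : A.direction ≤ (A' ⊔ A).direction :=
    AffineSubspace.direction_le (le_sup_right : A ≤ A' ⊔ A)
  have he1 : A'.direction = (A' ⊔ A).direction :=
    Submodule.eq_of_le_of_finrank_le hd1 (hS.trans h2)
  have he2 : A.direction = (A' ⊔ A).direction :=
    Submodule.eq_of_le_of_finrank_le hd2 hS
  exact AffineSubspace.ext_of_direction_eq (he1.trans he2.symm) ⟨P, hPA', hPA⟩
end
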